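/- Let E be a real inner product space that is a complete normed space, let c > 0, a > 0 and X ∈ E. The function U ↦ a·H_c(‖U‖) + (1/2)‖U − X‖² has a unique minimizer over E, equal to (1 − a / max(‖X‖/c, a+1)) · X. (In particular, when X = 0 the minimizer is 0.) -/

import Mathlib

/-- The Huber function with threshold `c`. -/
noncomputable def huber (c x : ℝ) : ℝ :=
  if |x| ≤ c then x ^ 2 / 2 else c * (|x| - c / 2)

lemma huber_convex_lb (c r r₀ : ℝ) (hc : 0 < c) (hr : 0 ≤ r) (hr₀ : 0 ≤ r₀) :
    huber c r₀ + min r₀ c * (r - r₀) ≤ huber c r := by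
  unfold huber
  rw [abs_of_nonneg hr, abs_of_nonneg hr₀]
  rcases le_or_gt r c with h1 | h1 <;> rcases le_or_gt r₀ c with h2 | h2
  · rw [if_pos h1, if_pos h2, min_eq_left h2]; nlinarith [sq_nonneg (r - r₀)]
  · rw [if_pos h1, if_neg (not_le.mpr h2), min_eq_right h2.le]; nlinarith [sq_nonneg (r - c)]
  · rw [if_neg (not_le.mpr h1), if_pos h2, min_eq_left h2]; nlinarith [sq_nonneg (c - r₀)]
  · rw [if_neg (not_le.mpr h1), if_neg (not_le.mpr h2), min_eq_right h2.le]; nlinarith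

/-- Let `E` be a real inner product space that is a complete normed space, `c > 0`, `a > 0`,
`X ∈ E`. The function `U ↦ a·H_c(‖U‖) + (1/2)‖U − X‖²` has a unique minimizer over `E`,
equal to `(1 − a / max (‖X‖/c) (a+1)) • X`. -/
theorem prox_huber_comp_norm {E : Type*} [NormedAddCommGroup E] [InnerProductSpace ℝ E]
    [CompleteSpace E] (c a : ℝ) (hc : 0 < c) (ha : 0 < a) (X : E) :
    let f : E → ℝ := fun U => a * huber c ‖U‖ + (1 / 2) * ‖U - X‖ ^ 2
    let P : E := (1 - a / max (‖X‖ / c) (a + 1)) • X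
    (∀ U, f P ≤ f U) ∧ (∀ U, (∀ W, f U ≤ f W) → U = P) := by
  intro f P
  set s : ℝ := ‖X‖ with hs
  have hs0 : 0 ≤ s := norm_nonneg X
  set M : ℝ := max (s / c) (a + 1) with hM
  have hMge : a + 1 ≤ M := le_max_right _ _
  have hMpos : 0 < M := lt_of_lt_of_le (by linarith) hMge
  set t : ℝ := 1 - a / M with ht
  have ht0 : 0 < t := by
    have : a / M < 1 := (div_lt_one hMpos).mpr (by linarith)
    simp only [ht]; linarith
  have ht1 : t ≤ 1 := by
    have : 0 ≤ a / M := div_nonneg ha.le hMpos.le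
    simp only [ht]; linarith
  set r₀ : ℝ := t * s with hr₀def
  have hr₀ : 0 ≤ r₀ := mul_nonneg ht0.le hs0
  have hPd : P = t • X := rfl
  have hPnorm : ‖P‖ = r₀ := by
    rw [hPd, norm_smul, Real.norm_eq_abs, abs_of_pos ht0]
  -- key subgradient equation
  have key : a * min r₀ c = s - r₀ := by
    rcases le_or_gt (s / c) (a + 1) with h | h
    · have hMa : M = a + 1 := max_eq_right h
      have hcs : s ≤ c * (a + 1) := by
        rw [div_le_iff₀ hc] at h; linarith
      have hre : r₀ = s / (a + 1) := by
        rw [hr₀def, ht, hMa]; field_simp; ring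
      have hr₀c : r₀ ≤ c := by
        rw [hre, div_le_iff₀ (by linarith : (0:ℝ) < a + 1)]; linarith
      rw [min_eq_left hr₀c, hre]
      field_simp
      ring
    · have hMa : M = s / c := max_eq_left h.le
      have hscpos : 0 < s / c := lt_trans (by linarith) h
      have hspos : 0 < s := by
        have := mul_pos hscpos hc
        rwa [div_mul_cancel₀ s hc.ne'] at this
      have hr₀eq : r₀ = s - a * c := by
        rw [hr₀def, ht, hMa]
        field_simp
      have hcas : c * (a + 1) < s := by
        rw [lt_div_iff₀ hc] at h; linarith
      have hr₀c : c ≤ r₀ := by rw [hr₀eq]; nlinarith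
      rw [min_eq_right hr₀c, hr₀eq]; ring
  -- exact decomposition of f U - f P
  have expand : ∀ U : E,
      f U - f P = (a * (huber c ‖U‖ - huber c r₀) - (s - r₀) * (‖U‖ - r₀))
        + (1 / 2) * (‖U‖ - r₀) ^ 2 + (‖U‖ * s - inner ℝ U X) := by
    intro U
    have hU2 : ‖U - X‖ ^ 2 = ‖U‖ ^ 2 - 2 * inner ℝ U X + s ^ 2 := by
      rw [@norm_sub_sq_real]
    have hPX : P - X = (t - 1) • X := by
      have h0 : (t - 1) • X = t • X - X := by rw [sub_smul, one_smul]
      rw [h0, hPd]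
    have hP2 : ‖P - X‖ ^ 2 = (s - r₀) ^ 2 := by
      rw [hPX, norm_smul, Real.norm_eq_abs, abs_of_nonpos (by linarith)]
      rw [hr₀def]; ring
    show a * huber c ‖U‖ + (1 / 2) * ‖U - X‖ ^ 2
        - (a * huber c ‖P‖ + (1 / 2) * ‖P - X‖ ^ 2) = _
    rw [hU2, hP2, hPnorm]
    ring
  have nonneg1 : ∀ U : E,
      0 ≤ a * (huber c ‖U‖ - huber c r₀) - (s - r₀) * (‖U‖ - r₀) := by
    intro U
    have h1 := huber_convex_lb c ‖U‖ r₀ hc (norm_nonneg U) hr₀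
    have h2 : (s - r₀) * (‖U‖ - r₀) = a * (min r₀ c * (‖U‖ - r₀)) := by
      rw [← key]; ring
    have h3 : a * (min r₀ c * (‖U‖ - r₀)) ≤ a * (huber c ‖U‖ - huber c r₀) :=
      mul_le_mul_of_nonneg_left (by linarith) ha.le
    linarith
  have nonneg3 : ∀ U : E, 0 ≤ ‖U‖ * s - inner ℝ U X := by
    intro U
    have := real_inner_le_norm U X
    rw [← hs] at this
    nlinarith [this]
  clear_value f P
  constructor
  · intro U
    have h := expand U
    have := nonneg1 U
    have := nonneg3 U
    nlinarith [sq_nonneg (‖U‖ - r₀)]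
  · intro U hU
    have h1 : f U ≤ f P := hU P
    have h2 := expand U
    have h3 : (1 / 2) * (‖U‖ - r₀) ^ 2 + (‖U‖ * s - inner ℝ U X) ≤ 0 := by
      have := nonneg1 U
      linarith
    have hsq : (‖U‖ - r₀) ^ 2 = 0 := by
      have := nonneg3 U
      nlinarith [sq_nonneg (‖U‖ - r₀)]
    have hnorm : ‖U‖ = r₀ := by
      have := pow_eq_zero_iff (n := 2) (by norm_num) |>.mp hsq
      linarith [this]
    have hinner : (inner ℝ U X : ℝ) = ‖U‖ * s := by
      rw [hsq] at h3
      have := nonneg3 U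
      linarith
    rw [hs] at hinner
    rcases eq_or_ne X 0 with hX | hX
    · have hsz : s = 0 := by rw [hs, hX, norm_zero]
      have hU0 : ‖U‖ = 0 := by rw [hnorm, hr₀def, hsz, mul_zero]
      rw [norm_eq_zero.mp hU0, hPd, hX, smul_zero]
    · have hcs : ‖X‖ • U = ‖U‖ • X := inner_eq_norm_mul_iff_real.mp hinner
      have h5 : ‖X‖ • U = (t * ‖X‖) • X := by
        rw [hcs, hnorm, hr₀def, hs]
      have h6 : ‖X‖ • (t • X) = (t * ‖X‖) • X := by
        rw [smul_smul, mul_comm]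
      rw [hPd]
      exact smul_right_injective E (norm_ne_zero_iff.mpr hX) (h5.trans h6.symm)
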